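/- Let G be a graph with a designated set of deletable edges, and suppose every 4-cycle subgraph (not necessarily induced) of G contains an undeletable edge. Construct G' by adding, for each undeletable edge uv and each i in {1,...,N}, two new vertices a_i and b_i with edges u a_i, u b_i, v b_i, a_i b_i (gadgets pairwise disjoint and non-adjacent). If F is a set of deletable edges of G such that G - F is C4-free, then G' - F is house-free. -/

import Mathlib

/-- The cycle on 4 vertices. -/
def C4 : SimpleGraph (Fin 4) :=
  SimpleGraph.fromEdgeSet {s(0,1), s(1,2), s(2,3), s(3,0)}

/-- The house graph: a 4-cycle with a fifth vertex adjacent to two adjacent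
cycle vertices (the complement of `P5`). -/
def house : SimpleGraph (Fin 5) :=
  SimpleGraph.fromEdgeSet {s(0,1), s(1,2), s(2,3), s(3,0), s(0,4), s(1,4)}

/-- The graph `G'` obtained from `G` by attaching, for each undeletable edge `uv`
(i.e. edge not in the deletable set `D`) and each `i < N`, a gadget of two new
vertices `a_i` (the `false` copy) and `b_i` (the `true` copy) with edges
`u aᵢ, u bᵢ, v bᵢ, aᵢ bᵢ`; the gadgets are pairwise disjoint and non-adjacent. -/
def delGadget {V : Type*} (G : SimpleGraph V) (D : Set (Sym2 V)) (N : ℕ) :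
    SimpleGraph (V ⊕ ({p : V × V // G.Adj p.1 p.2 ∧ s(p.1, p.2) ∉ D} × Fin N × Bool)) :=
  SimpleGraph.fromRel (fun x y =>
    match x, y with
    | Sum.inl a, Sum.inl b => G.Adj a b
    | Sum.inl a, Sum.inr (e, _, false) => a = e.1.1
    | Sum.inl a, Sum.inr (e, _, true) => a = e.1.1 ∨ a = e.1.2
    | Sum.inr (e, i, false), Sum.inr (e', j, true) => e = e' ∧ i = j
    | _, _ => False)


namespace Scratch
variable {V : Type*} {G : SimpleGraph V} {D : Set (Sym2 V)} {N : ℕ} {F : Set (Sym2 V)}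
  {a b : V} {e e' : {p : V × V // G.Adj p.1 p.2 ∧ s(p.1, p.2) ∉ D}} {i j : Fin N}

lemma not_mem_image_inl (x : V ⊕ ({p : V × V // G.Adj p.1 p.2 ∧ s(p.1, p.2) ∉ D} × Fin N × Bool))
    (g : {p : V × V // G.Adj p.1 p.2 ∧ s(p.1, p.2) ∉ D} × Fin N × Bool) :
    s(x, Sum.inr g) ∉ Sym2.map Sum.inl '' F := by
  rintro ⟨p, hp, heq⟩
  induction p using Sym2.ind with
  | _ u v =>
    rw [Sym2.map_pair_eq, Sym2.eq_iff] at heq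
    rcases heq with ⟨-, h⟩ | ⟨h, -⟩ <;> exact Sum.inl_ne_inr h

lemma mem_image_inl :
    s((Sum.inl a : V ⊕ ({p : V × V // G.Adj p.1 p.2 ∧ s(p.1, p.2) ∉ D} × Fin N × Bool)),
      Sum.inl b) ∈ Sym2.map Sum.inl '' F ↔ s(a, b) ∈ F := by
  constructor
  · rintro ⟨p, hp, heq⟩
    induction p using Sym2.ind with
    | _ u v =>
      rw [Sym2.map_pair_eq, Sym2.eq_iff] at heq
      simp only [Sum.inl.injEq] at heq
      rcases heq with ⟨h1, h2⟩ | ⟨h1, h2⟩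
      · subst h1; subst h2; exact hp
      · subst h1; subst h2; rwa [Sym2.eq_swap]
  · intro h; exact ⟨s(a, b), h, Sym2.map_pair_eq _ _ _⟩

lemma adjA : ((delGadget G D N).deleteEdges (Sym2.map Sum.inl '' F)).Adj (Sum.inl a) (Sum.inl b)
    ↔ (G.deleteEdges F).Adj a b := by
  rw [SimpleGraph.deleteEdges_adj, SimpleGraph.deleteEdges_adj, mem_image_inl]
  simp only [delGadget, SimpleGraph.fromRel_adj]
  constructor
  · rintro ⟨⟨h, h1 | h1⟩, h2⟩ <;> exact ⟨by first | exact h1 | exact h1.symm, h2⟩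
  · rintro ⟨h1, h2⟩
    exact ⟨⟨by rintro heq; rw [Sum.inl.injEq] at heq; subst heq; exact G.irrefl h1, Or.inl h1⟩, h2⟩

lemma adjB : ((delGadget G D N).deleteEdges (Sym2.map Sum.inl '' F)).Adj (Sum.inl a)
    (Sum.inr (e, i, false)) ↔ a = e.1.1 := by
  rw [SimpleGraph.deleteEdges_adj]
  simp only [delGadget, SimpleGraph.fromRel_adj, Set.mem_image, not_exists, not_and]
  constructor
  · rintro ⟨⟨_, h | h⟩, -⟩; exacts [h, h.elim]
  · exact fun h => ⟨⟨by simp, Or.inl h⟩, fun p hp heq => not_mem_image_inl _ _ ⟨p, hp, heq⟩⟩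

lemma adjC : ((delGadget G D N).deleteEdges (Sym2.map Sum.inl '' F)).Adj (Sum.inl a)
    (Sum.inr (e, i, true)) ↔ (a = e.1.1 ∨ a = e.1.2) := by
  rw [SimpleGraph.deleteEdges_adj]
  simp only [delGadget, SimpleGraph.fromRel_adj, Set.mem_image, not_exists, not_and]
  constructor
  · rintro ⟨⟨_, h | h⟩, -⟩; exacts [h, h.elim]
  · exact fun h => ⟨⟨by simp, Or.inl h⟩, fun p hp heq => not_mem_image_inl _ _ ⟨p, hp, heq⟩⟩

lemma adjD : ((delGadget G D N).deleteEdges (Sym2.map Sum.inl '' F)).Adj (Sum.inr (e, i, false))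
    (Sum.inr (e', j, true)) ↔ (e = e' ∧ i = j) := by
  rw [SimpleGraph.deleteEdges_adj]
  simp only [delGadget, SimpleGraph.fromRel_adj, Set.mem_image, not_exists, not_and]
  constructor
  · rintro ⟨⟨_, h | h⟩, -⟩; exacts [h, h.elim]
  · exact fun h => ⟨⟨by simp, Or.inl h⟩, fun p hp heq => not_mem_image_inl _ _ ⟨p, hp, heq⟩⟩

lemma adjE : ¬((delGadget G D N).deleteEdges (Sym2.map Sum.inl '' F)).Adj (Sum.inr (e, i, false))
    (Sum.inr (e', j, false)) := by
  rw [SimpleGraph.deleteEdges_adj]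
  simp [delGadget, SimpleGraph.fromRel_adj]

lemma adjF : ¬((delGadget G D N).deleteEdges (Sym2.map Sum.inl '' F)).Adj (Sum.inr (e, i, true))
    (Sum.inr (e', j, true)) := by
  rw [SimpleGraph.deleteEdges_adj]
  simp [delGadget, SimpleGraph.fromRel_adj]

end Scratch

namespace Scratch2
open Scratch
variable {V : Type*} {G : SimpleGraph V} {D : Set (Sym2 V)} {N : ℕ} {F : Set (Sym2 V)}
  {e : {p : V × V // G.Adj p.1 p.2 ∧ s(p.1, p.2) ∉ D}} {i : Fin N}

lemma nbr_false {t} (h : ((delGadget G D N).deleteEdges (Sym2.map Sum.inl '' F)).Adj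
    (Sum.inr (e, i, false)) t) : t = Sum.inl e.1.1 ∨ t = Sum.inr (e, i, true) := by
  obtain a | ⟨e', j, _ | _⟩ := t
  · exact Or.inl (by rw [(adjB.mp h.symm : a = e.1.1)])
  · exact absurd h adjE
  · obtain ⟨rfl, rfl⟩ := adjD.mp h
    exact Or.inr rfl

lemma nbr_true {t} (h : ((delGadget G D N).deleteEdges (Sym2.map Sum.inl '' F)).Adj
    (Sum.inr (e, i, true)) t) :
    t = Sum.inl e.1.1 ∨ t = Sum.inl e.1.2 ∨ t = Sum.inr (e, i, false) := by
  obtain a | ⟨e', j, _ | _⟩ := t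
  · rcases adjC.mp h.symm with h1 | h1
    · exact Or.inl (by rw [h1])
    · exact Or.inr (Or.inl (by rw [h1]))
  · obtain ⟨rfl, rfl⟩ := adjD.mp h.symm
    exact Or.inr (Or.inr rfl)
  · exact absurd h adjF

lemma inl_of_cycle (hF : F ⊆ D)
    {w x y z : V ⊕ ({p : V × V // G.Adj p.1 p.2 ∧ s(p.1, p.2) ∉ D} × Fin N × Bool)}
    (hwx : ((delGadget G D N).deleteEdges (Sym2.map Sum.inl '' F)).Adj w x)
    (hxy : ((delGadget G D N).deleteEdges (Sym2.map Sum.inl '' F)).Adj x y)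
    (hyz : ((delGadget G D N).deleteEdges (Sym2.map Sum.inl '' F)).Adj y z)
    (hzw : ((delGadget G D N).deleteEdges (Sym2.map Sum.inl '' F)).Adj z w)
    (hxz : x ≠ z) (hwy : w ≠ y)
    (nxz : ¬((delGadget G D N).deleteEdges (Sym2.map Sum.inl '' F)).Adj x z)
    (nwy : ¬((delGadget G D N).deleteEdges (Sym2.map Sum.inl '' F)).Adj w y) :
    ∃ a, w = Sum.inl a := by
  obtain a | ⟨e, i, _ | _⟩ := w
  · exact ⟨a, rfl⟩
  · -- w = a_i (false copy): neighbors are u and b_i, which are adjacent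
    have hub : ((delGadget G D N).deleteEdges (Sym2.map Sum.inl '' F)).Adj
        (Sum.inl e.1.1) (Sum.inr (e, i, true)) := adjC.mpr (Or.inl rfl)
    rcases nbr_false hwx with rfl | rfl <;> rcases nbr_false hzw.symm with h2 | h2
    · exact (hxz h2.symm).elim
    · exact (nxz (by rw [h2]; exact hub)).elim
    · exact (nxz (by rw [h2]; exact hub.symm)).elim
    · exact (hxz h2.symm).elim
  · -- w = b_i (true copy)
    have hub : ((delGadget G D N).deleteEdges (Sym2.map Sum.inl '' F)).Adj
        (Sum.inl e.1.1) (Sum.inr (e, i, true)) := adjC.mpr (Or.inl rfl)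
    have hua : ((delGadget G D N).deleteEdges (Sym2.map Sum.inl '' F)).Adj
        (Sum.inl e.1.1) (Sum.inr (e, i, false)) := adjB.mpr rfl
    have huv : ((delGadget G D N).deleteEdges (Sym2.map Sum.inl '' F)).Adj
        (Sum.inl e.1.1) (Sum.inl e.1.2) :=
      adjA.mpr (SimpleGraph.deleteEdges_adj.mpr ⟨e.2.1, fun hm => e.2.2 (hF hm)⟩)
    -- so x, z ∈ {u, v, a_i}; the only non-adjacent pair is {v, a_i}
    have key : ∀ t, ((delGadget G D N).deleteEdges (Sym2.map Sum.inl '' F)).Adj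
        t (Sum.inr (e, i, false)) → t ≠ Sum.inr (e, i, true) → t = Sum.inl e.1.1 := by
      intro t ht hne
      rcases nbr_false ht.symm with h | h
      · exact h
      · exact absurd h hne
    rcases nbr_true hwx with rfl | rfl | rfl <;> rcases nbr_true hzw.symm with h2 | h2 | h2
    · exact (hxz h2.symm).elim
    · exact (nxz (by rw [h2]; exact huv)).elim
    · exact (nxz (by rw [h2]; exact hua)).elim
    · exact (nxz (by rw [h2]; exact huv.symm)).elim
    · exact (hxz h2.symm).elim
    · -- x = v, z = a_i : y adjacent to a_i, y ≠ w = b_i so y = u, but then w ~ y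
      subst h2
      have hy : y = Sum.inl e.1.1 := key y hyz hwy.symm
      exact (nwy (by rw [hy]; exact hub.symm)).elim
    · exact (nxz (by rw [h2]; exact hua.symm)).elim
    · -- x = a_i, z = v : y adjacent to a_i (from hxy), y = u
      have hy : y = Sum.inl e.1.1 := key y hxy.symm hwy.symm
      exact (nwy (by rw [hy]; exact hub.symm)).elim
    · exact (hxz h2.symm).elim
end Scratch2


noncomputable def c4_emb {V : Type*} (Gd : SimpleGraph V) (a0 a1 a2 a3 : V)
    (A01 : Gd.Adj a0 a1) (A12 : Gd.Adj a1 a2) (A23 : Gd.Adj a2 a3) (A30 : Gd.Adj a3 a0)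
    (N02 : ¬Gd.Adj a0 a2) (N13 : ¬Gd.Adj a1 a3)
    (d01 : a0 ≠ a1) (d02 : a0 ≠ a2) (d03 : a0 ≠ a3)
    (d12 : a1 ≠ a2) (d13 : a1 ≠ a3) (d23 : a2 ≠ a3) :
    C4 ↪g Gd := by
  refine ⟨⟨![a0, a1, a2, a3], ?_⟩, @fun i j => ?_⟩
  · intro i j hij
    fin_cases i <;> fin_cases j <;> simp_all
  · fin_cases i <;> fin_cases j <;>
      simp [C4] <;>
      first
        | exact A01 | exact A01.symm | exact A12 | exact A12.symm
        | exact A23 | exact A23.symm | exact A30 | exact A30.symm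
        | exact N02 | exact fun h => N02 h.symm
        | exact N13 | exact fun h => N13 h.symm

/-- If every (not necessarily induced) 4-cycle subgraph of `G` contains an
undeletable edge, and `F` is a set of deletable edges such that `G - F` is
`C4`-free, then `G' - F` is house-free. -/
theorem gadget_deletion_house_free {V : Type*} (G : SimpleGraph V)
    (D : Set (Sym2 V)) (hD : D ⊆ G.edgeSet) (N : ℕ)
    (h4 : ∀ a b c d : V, a ≠ b → a ≠ c → a ≠ d → b ≠ c → b ≠ d → c ≠ d →
      G.Adj a b → G.Adj b c → G.Adj c d → G.Adj d a →
      s(a,b) ∉ D ∨ s(b,c) ∉ D ∨ s(c,d) ∉ D ∨ s(d,a) ∉ D)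
    (F : Set (Sym2 V)) (hF : F ⊆ D)
    (hfree : IsEmpty (C4 ↪g G.deleteEdges F)) :
    IsEmpty (house ↪g (delGadget G D N).deleteEdges (Sym2.map Sum.inl '' F)) := by
  constructor
  intro f
  set H := (delGadget G D N).deleteEdges (Sym2.map Sum.inl '' F) with hH
  have h01 : H.Adj (f 0) (f 1) := f.map_adj_iff.mpr (by simp [house])
  have h12 : H.Adj (f 1) (f 2) := f.map_adj_iff.mpr (by simp [house])
  have h23 : H.Adj (f 2) (f 3) := f.map_adj_iff.mpr (by simp [house])
  have h30 : H.Adj (f 3) (f 0) := f.map_adj_iff.mpr (by simp [house])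
  have n02 : ¬H.Adj (f 0) (f 2) := fun h => by
    have := f.map_adj_iff.mp h; simp [house] at this
  have n13 : ¬H.Adj (f 1) (f 3) := fun h => by
    have := f.map_adj_iff.mp h; simp [house] at this
  have ne02 : f 0 ≠ f 2 := fun h => by have := f.injective h; simp at this
  have ne13 : f 1 ≠ f 3 := fun h => by have := f.injective h; simp at this
  obtain ⟨a0, h0⟩ := Scratch2.inl_of_cycle hF h01 h12 h23 h30 ne13 ne02 n13 n02
  obtain ⟨a1, h1⟩ := Scratch2.inl_of_cycle hF h12 h23 h30 h01 ne02.symm ne13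
    (fun h => n02 h.symm) n13
  obtain ⟨a2, h2⟩ := Scratch2.inl_of_cycle hF h23 h30 h01 h12 ne13.symm ne02.symm
    (fun h => n13 h.symm) (fun h => n02 h.symm)
  obtain ⟨a3, h3⟩ := Scratch2.inl_of_cycle hF h30 h01 h12 h23 ne02 ne13.symm n02
    (fun h => n13 h.symm)
  have A01 : (G.deleteEdges F).Adj a0 a1 := Scratch.adjA.mp (by rw [← h0, ← h1]; exact h01)
  have A12 : (G.deleteEdges F).Adj a1 a2 := Scratch.adjA.mp (by rw [← h1, ← h2]; exact h12)
  have A23 : (G.deleteEdges F).Adj a2 a3 := Scratch.adjA.mp (by rw [← h2, ← h3]; exact h23)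
  have A30 : (G.deleteEdges F).Adj a3 a0 := Scratch.adjA.mp (by rw [← h3, ← h0]; exact h30)
  have N02 : ¬(G.deleteEdges F).Adj a0 a2 := fun h =>
    n02 (by rw [h0, h2]; exact Scratch.adjA.mpr h)
  have N13 : ¬(G.deleteEdges F).Adj a1 a3 := fun h =>
    n13 (by rw [h1, h3]; exact Scratch.adjA.mpr h)
  have inj : ∀ i j : Fin 5, f i = f j → i = j := fun i j h => f.injective h
  have d01 : a0 ≠ a1 := fun h => by
    have := inj 0 1 (by rw [h0, h1, h]); simp at this
  have d02 : a0 ≠ a2 := fun h => by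
    have := inj 0 2 (by rw [h0, h2, h]); simp at this
  have d03 : a0 ≠ a3 := fun h => by
    have := inj 0 3 (by rw [h0, h3, h]); simp at this
  have d12 : a1 ≠ a2 := fun h => by
    have := inj 1 2 (by rw [h1, h2, h]); simp at this
  have d13 : a1 ≠ a3 := fun h => by
    have := inj 1 3 (by rw [h1, h3, h]); simp at this
  have d23 : a2 ≠ a3 := fun h => by
    have := inj 2 3 (by rw [h2, h3, h]); simp at this
  exact hfree.false (c4_emb (G.deleteEdges F) a0 a1 a2 a3 A01 A12 A23 A30 N02 N13
    d01 d02 d03 d12 d13 d23)
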